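/- Let X be a real Banach space with dim X ≥ 2 and let κ, τ > 0. If T₁(κ,τ,X) < κ + τ, then X is uniformly non-square. -/

import Mathlib

/-- The constant `T₁(κ,τ,X) = sup{ (‖κx + τy‖ ‖κx − τy‖)^{1/2} : x, y ∈ S(X) }`. -/
noncomputable def T1 (X : Type*) [NormedAddCommGroup X] [NormedSpace ℝ X] (κ τ : ℝ) : ℝ :=
  sSup {r : ℝ | ∃ x y : X, ‖x‖ = 1 ∧ ‖y‖ = 1 ∧
    r = Real.sqrt (‖κ • x + τ • y‖ * ‖κ • x - τ • y‖)}

/-- `X` is uniformly non-square: there exists `δ ∈ (0,1)` with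
`min(‖x+y‖/2, ‖x−y‖/2) ≤ 1 − δ` for all `x, y` in the unit sphere. -/
def UniformlyNonSquare (X : Type*) [NormedAddCommGroup X] : Prop :=
  ∃ δ : ℝ, 0 < δ ∧ δ < 1 ∧ ∀ x y : X, ‖x‖ = 1 → ‖y‖ = 1 →
    min (‖x + y‖ / 2) (‖x - y‖ / 2) ≤ 1 - δ

/-- If `T₁(κ,τ,X) < κ + τ` for a real Banach space `X` with `dim X ≥ 2`,
then `X` is uniformly non-square. -/
theorem stmt7 {X : Type*} [NormedAddCommGroup X] [NormedSpace ℝ X] [CompleteSpace X]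
    (hdim : 2 ≤ Module.rank ℝ X) (κ τ : ℝ) (hκ : 0 < κ) (hτ : 0 < τ)
    (h : T1 X κ τ < κ + τ) :
    UniformlyNonSquare X := by
  have hκτ : 0 < κ + τ := by linarith
  -- X is nontrivial
  have hnt : Nontrivial X := by
    rw [← rank_pos_iff_nontrivial (R := ℝ)]
    exact lt_of_lt_of_le (by norm_num) hdim
  obtain ⟨v, hv⟩ := exists_ne (0 : X)
  set u : X := ‖v‖⁻¹ • v with hu_def
  have hu : ‖u‖ = 1 := by
    rw [hu_def, norm_smul, norm_inv, norm_norm,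
      inv_mul_cancel₀ (norm_ne_zero_iff.mpr hv)]
  set S : Set ℝ := {r : ℝ | ∃ x y : X, ‖x‖ = 1 ∧ ‖y‖ = 1 ∧
    r = Real.sqrt (‖κ • x + τ • y‖ * ‖κ • x - τ • y‖)} with hS_def
  have hT1 : T1 X κ τ = sSup S := rfl
  have hbdd : BddAbove S := by
    refine ⟨κ + τ, ?_⟩
    rintro r ⟨x, y, hx, hy, rfl⟩
    have h1 : ‖κ • x + τ • y‖ ≤ κ + τ := by
      calc ‖κ • x + τ • y‖ ≤ ‖κ • x‖ + ‖τ • y‖ := norm_add_le _ _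
        _ = κ + τ := by
          rw [norm_smul, norm_smul, hx, hy, Real.norm_eq_abs, Real.norm_eq_abs,
            abs_of_pos hκ, abs_of_pos hτ]; ring
    have h2 : ‖κ • x - τ • y‖ ≤ κ + τ := by
      calc ‖κ • x - τ • y‖ ≤ ‖κ • x‖ + ‖τ • y‖ := norm_sub_le _ _
        _ = κ + τ := by
          rw [norm_smul, norm_smul, hx, hy, Real.norm_eq_abs, Real.norm_eq_abs,
            abs_of_pos hκ, abs_of_pos hτ]; ring
    calc Real.sqrt (‖κ • x + τ • y‖ * ‖κ • x - τ • y‖)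
        ≤ Real.sqrt ((κ + τ) * (κ + τ)) :=
          Real.sqrt_le_sqrt (mul_le_mul h1 h2 (norm_nonneg _) (le_of_lt hκτ))
      _ = κ + τ := Real.sqrt_mul_self (le_of_lt hκτ)
  have hmem : ∀ x y : X, ‖x‖ = 1 → ‖y‖ = 1 →
      Real.sqrt (‖κ • x + τ • y‖ * ‖κ • x - τ • y‖) ≤ T1 X κ τ := by
    intro x y hx hy
    exact le_csSup hbdd ⟨x, y, hx, hy, rfl⟩
  have hT1nn : 0 ≤ T1 X κ τ :=
    le_trans (Real.sqrt_nonneg _) (hmem u u hu hu)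
  -- parameters
  set c : ℝ := T1 X κ τ / (κ + τ) with hc_def
  have hc0 : 0 ≤ c := div_nonneg hT1nn (le_of_lt hκτ)
  have hc1 : c < 1 := (div_lt_one hκτ).mpr h
  set ε : ℝ := (1 - c) / 2 with hε_def
  have hε0 : 0 < ε := by rw [hε_def]; linarith
  have hε2 : ε ≤ 1 / 2 := by rw [hε_def]; linarith
  set δ : ℝ := ε / 2 with hδ_def
  refine ⟨δ, by positivity, by rw [hδ_def]; linarith, ?_⟩
  intro x y hx hy
  by_contra hcon
  push_neg at hcon
  obtain ⟨h1, h2⟩ := lt_min_iff.mp hcon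
  -- ‖x + y‖ > 2 - ε and ‖x - y‖ > 2 - ε
  have hxy : 2 - ε < ‖x + y‖ := by
    rw [hδ_def] at h1; linarith
  have hxy' : 2 - ε < ‖x - y‖ := by
    rw [hδ_def] at h2; linarith
  have hne1 : x + y ≠ 0 := by
    intro h0; rw [h0, norm_zero] at hxy; linarith
  have hne2 : x - y ≠ 0 := by
    intro h0; rw [h0, norm_zero] at hxy'; linarith
  obtain ⟨f, hf1, hfval⟩ := exists_dual_vector ℝ (x + y) (norm_ne_zero_iff.mpr hne1)
  obtain ⟨g, hg1, hgval⟩ := exists_dual_vector ℝ (x - y) (norm_ne_zero_iff.mpr hne2)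
  have hfb : ∀ z : X, f z ≤ ‖z‖ := by
    intro z
    calc f z ≤ |f z| := le_abs_self _
      _ = ‖f z‖ := rfl
      _ ≤ ‖f‖ * ‖z‖ := f.le_opNorm z
      _ = ‖z‖ := by rw [hf1, one_mul]
  have hgb : ∀ z : X, g z ≤ ‖z‖ := by
    intro z
    calc g z ≤ |g z| := le_abs_self _
      _ = ‖g z‖ := rfl
      _ ≤ ‖g‖ * ‖z‖ := g.le_opNorm z
      _ = ‖z‖ := by rw [hg1, one_mul]
  have hfsum : f x + f y = ‖x + y‖ := by
    have := hfval
    rw [map_add] at this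
    exact_mod_cast this
  have hgsum : g x - g y = ‖x - y‖ := by
    have := hgval
    rw [map_sub] at this
    exact_mod_cast this
  have hfx : 1 - ε < f x := by
    have := hfb y; rw [hy] at this; linarith
  have hfy : 1 - ε < f y := by
    have := hfb x; rw [hx] at this; linarith
  have hgx : 1 - ε < g x := by
    have := hgb (-y); rw [norm_neg, hy, map_neg] at this; linarith
  have hgy : 1 - ε < -(g y) := by
    have := hgb x; rw [hx] at this; linarith
  set M : ℝ := (κ + τ) * (1 - ε) with hM_def
  have hM0 : 0 < M := by
    apply mul_pos hκτ; linarith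
  have hA : M < ‖κ • x + τ • y‖ := by
    have hfe : f (κ • x + τ • y) = κ * f x + τ * f y := by
      rw [map_add, map_smul, map_smul]; rfl
    have hfle : f (κ • x + τ • y) ≤ ‖κ • x + τ • y‖ := hfb _
    have : M < κ * f x + τ * f y := by
      have e1 : κ * (1 - ε) < κ * f x := mul_lt_mul_of_pos_left hfx hκ
      have e2 : τ * (1 - ε) < τ * f y := mul_lt_mul_of_pos_left hfy hτ
      calc M = κ * (1 - ε) + τ * (1 - ε) := by rw [hM_def]; ring
        _ < κ * f x + τ * f y := by linarith
    linarith [hfe ▸ hfle]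
  have hB : M < ‖κ • x - τ • y‖ := by
    have hge : g (κ • x - τ • y) = κ * g x - τ * g y := by
      rw [map_sub, map_smul, map_smul]; rfl
    have hgle : g (κ • x - τ • y) ≤ ‖κ • x - τ • y‖ := hgb _
    have : M < κ * g x - τ * g y := by
      have e1 : κ * (1 - ε) < κ * g x := mul_lt_mul_of_pos_left hgx hκ
      have e2 : τ * (1 - ε) < τ * -(g y) := mul_lt_mul_of_pos_left hgy hτ
      rw [mul_neg] at e2
      calc M = κ * (1 - ε) + τ * (1 - ε) := by rw [hM_def]; ring
        _ < κ * g x - τ * g y := by linarith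
    linarith [hge ▸ hgle]
  have hsqrt : M < Real.sqrt (‖κ • x + τ • y‖ * ‖κ • x - τ • y‖) := by
    have : M * M < ‖κ • x + τ • y‖ * ‖κ • x - τ • y‖ :=
      mul_lt_mul hA (le_of_lt hB) hM0 (norm_nonneg _)
    calc M = Real.sqrt (M * M) := (Real.sqrt_mul_self (le_of_lt hM0)).symm
      _ < Real.sqrt (‖κ • x + τ • y‖ * ‖κ • x - τ • y‖) :=
        Real.sqrt_lt_sqrt (by positivity) this
  have hTM : T1 X κ τ < M := by
    have hT1c : T1 X κ τ = c * (κ + τ) := by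
      rw [hc_def]; field_simp
    have key : 0 < (κ + τ) * ((1 - c) / 2) :=
      mul_pos hκτ (by linarith : (0:ℝ) < (1 - c) / 2)
    have expand : M - c * (κ + τ) = (κ + τ) * ((1 - c) / 2) := by
      rw [hM_def, hε_def]; ring
    rw [hT1c]
    linarith
  exact absurd (hmem x y hx hy) (not_le.mpr (lt_trans hTM hsqrt))
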